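/- Let G be a group acting by measure-preserving transformations on a probability space X over a factor Y, and suppose f ∈ L²(X) with E(f|Y) = 0 is not relatively weakly mixing, i.e., there is ε > 0 such that ‖E((T^γ)*f · f̄ | Y)‖_{L²(Y)}² ≥ ε for all γ ∈ G. Then the element K of minimal norm in the closed convex hull of the orbit {(T^γ×T^γ)*(f ⊗ f̄) : γ ∈ G} in L²(X ×_Y X) is G-invariant and non-zero, with ‖K‖²_{L²(X×_Y X)} ≥ ε. -/

import Mathlib

open MeasureTheory ProbabilityTheory Filter
open scoped ENNReal BigOperators

namespace NWMaux

variable {X Y : Type*} [MeasurableSpace X] [MeasurableSpace Y]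

lemma bind_eq_snd_compProd (ν : Measure Y) [SFinite ν] (κ : Kernel Y X) [IsSFiniteKernel κ] :
    ν.bind (fun y => κ y) = (ν ⊗ₘ κ).map Prod.snd := by
  ext s hs
  rw [Measure.bind_apply hs (Kernel.measurable κ).aemeasurable, Measure.map_apply measurable_snd hs,
    Measure.compProd_apply (measurable_snd hs)]
  rfl

lemma integral_bind_kernel {E : Type*} [NormedAddCommGroup E] [NormedSpace ℝ E]
    (ν : Measure Y) [SFinite ν] (κ : Kernel Y X) [IsSFiniteKernel κ] {h : X → E}
    (hh : Integrable h (ν.bind (fun y => κ y))) :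
    ∫ x, h x ∂(ν.bind (fun y => κ y)) = ∫ y, ∫ x, h x ∂(κ y) ∂ν := by
  rw [bind_eq_snd_compProd] at hh ⊢
  rw [integral_map measurable_snd.aemeasurable hh.aestronglyMeasurable]
  have hint : Integrable (fun p : Y × X => h p.2) (ν ⊗ₘ κ) :=
    (integrable_map_measure hh.aestronglyMeasurable measurable_snd.aemeasurable).mp hh
  exact Measure.integral_compProd hint

lemma integrable_fiber_of_bind {E : Type*} [NormedAddCommGroup E]
    (ν : Measure Y) [SFinite ν] (κ : Kernel Y X) [IsSFiniteKernel κ]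
    {h : X → E} (hh : Integrable h (ν.bind (fun y => κ y))) :
    (∀ᵐ y ∂ν, Integrable h (κ y)) ∧ Integrable (fun y => ∫ x, ‖h x‖ ∂(κ y)) ν := by
  rw [bind_eq_snd_compProd] at hh
  have hmeas : AEStronglyMeasurable (fun p : Y × X => h p.2) (ν ⊗ₘ κ) :=
    hh.aestronglyMeasurable.comp_aemeasurable measurable_snd.aemeasurable
  have := (Measure.integrable_compProd_iff hmeas).mp
    ((integrable_map_measure hh.aestronglyMeasurable measurable_snd.aemeasurable).mp hh)
  exact this

lemma integrable_bind_of_fiber (ν : Measure Y) [SFinite ν] (κ : Kernel Y X) [IsSFiniteKernel κ]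
    {h : X → ℝ} (hm : Measurable h)
    (h1 : ∀ᵐ y ∂ν, Integrable h (κ y)) (h2 : Integrable (fun y => ∫ x, ‖h x‖ ∂(κ y)) ν) :
    Integrable h (ν.bind (fun y => κ y)) := by
  rw [bind_eq_snd_compProd]
  have hmeas : AEStronglyMeasurable (fun p : Y × X => h p.2) (ν ⊗ₘ κ) :=
    (hm.comp measurable_snd).aestronglyMeasurable
  have : Integrable (fun p : Y × X => h p.2) (ν ⊗ₘ κ) :=
    (Measure.integrable_compProd_iff hmeas).mpr ⟨h1, h2⟩
  rwa [integrable_map_measure (hm.aestronglyMeasurable) measurable_snd.aemeasurable]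

lemma stronglyMeasurable_kernel_integral {E : Type*} [NormedAddCommGroup E] [NormedSpace ℝ E]
    (κ : Kernel Y X) [IsSFiniteKernel κ] {h : X → E} (hh : StronglyMeasurable h) :
    StronglyMeasurable fun y => ∫ x, h x ∂κ y :=
  StronglyMeasurable.integral_kernel_prod_right (κ := κ) (f := fun _ x => h x)
    (hh.comp_measurable measurable_snd)

lemma ae_ae_of_ae_bind (ν : Measure Y) [SFinite ν] (κ : Kernel Y X) [IsSFiniteKernel κ]
    {p : X → Prop} (hp : ∀ᵐ x ∂(ν.bind (fun y => κ y)), p x) :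
    ∀ᵐ y ∂ν, ∀ᵐ x ∂κ y, p x := by
  rw [ae_iff] at hp
  set t := toMeasurable (ν.bind (fun y => κ y)) {x | ¬ p x} with ht
  have htm : MeasurableSet t := measurableSet_toMeasurable _ _
  have htnull : (ν.bind (fun y => κ y)) t = 0 := by
    rw [ht, measure_toMeasurable]; exact hp
  rw [Measure.bind_apply htm (Kernel.measurable κ).aemeasurable] at htnull
  have := (lintegral_eq_zero_iff (Kernel.measurable_coe κ htm)).mp htnull
  filter_upwards [this] with y hy
  rw [ae_iff]
  exact measure_mono_null (fun x hx => subset_toMeasurable _ _ hx) hy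

lemma preimage_ae_eq_of_idem {μ : Measure X} {T : X → X} (hT : MeasurePreserving T μ μ)
    (hTT : ∀ x, T (T x) = T x) {A : Set X} (hA : MeasurableSet A) :
    (T ⁻¹' A : Set X) =ᵐ[μ] A := by
  have h1 : T ⁻¹' (T ⁻¹' A) = T ⁻¹' A := by
    ext x; simp only [Set.mem_preimage, hTT x]
  rw [Filter.eventuallyEq_set]
  rw [ae_iff]
  have hsub : {x | ¬ (x ∈ T ⁻¹' A ↔ x ∈ A)} ⊆ (T ⁻¹' A \ A) ∪ (A \ T ⁻¹' A) := by
    intro x hx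
    simp only [Set.mem_setOf_eq] at hx
    simp only [Set.mem_union, Set.mem_diff]
    tauto
  refine measure_mono_null hsub (measure_union_null ?_ ?_)
  · have key : T ⁻¹' (T ⁻¹' A \ A) = ∅ := by
      rw [Set.preimage_diff, h1, Set.diff_self]
    have := hT.measure_preimage (((hA.preimage hT.measurable).diff hA).nullMeasurableSet)
    rw [key] at this
    simp only [measure_empty] at this
    exact this.symm
  · have key : T ⁻¹' (A \ T ⁻¹' A) = ∅ := by
      rw [Set.preimage_diff, h1, Set.diff_self]
    have := hT.measure_preimage ((hA.diff (hA.preimage hT.measurable)).nullMeasurableSet)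
    rw [key] at this
    simp only [measure_empty] at this
    exact this.symm

lemma comp_ae_eq_of_idem {μ : Measure X} {T : X → X} (hT : MeasurePreserving T μ μ)
    (hTT : ∀ x, T (T x) = T x) {g : X → ℂ} (hg : Measurable g) :
    (fun x => g (T x)) =ᵐ[μ] g := by
  obtain ⟨b, hbc, -, hb⟩ := TopologicalSpace.exists_countable_basis ℂ
  rw [Filter.EventuallyEq, ae_iff]
  have hsub : {x | ¬ g (T x) = g x} ⊆ ⋃ U ∈ b, (g ⁻¹' U \ T ⁻¹' (g ⁻¹' U)) := by
    intro x hx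
    simp only [Set.mem_setOf_eq] at hx
    obtain ⟨U, hUb, hxU, hU⟩ := hb.exists_subset_of_mem_open (by simpa using Ne.symm hx : g x ∈ ({g (T x)}ᶜ : Set ℂ))
      isClosed_singleton.isOpen_compl
    refine Set.mem_biUnion hUb ⟨hxU, fun h => ?_⟩
    exact (hU h) rfl
  refine measure_mono_null hsub ((measure_biUnion_null_iff hbc).mpr fun U hU => ?_)
  have hUm : MeasurableSet U := (hb.isOpen hU).measurableSet
  have := preimage_ae_eq_of_idem hT hTT (hg hUm)
  rw [Filter.eventuallyEq_set, ae_iff] at this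
  refine measure_mono_null (fun x hx => ?_) this
  simp only [Set.mem_setOf_eq, Set.mem_diff, Set.mem_preimage] at hx ⊢
  tauto

end NWMaux

namespace NWMaux2

open NWMaux

variable {X Y : Type*} [MeasurableSpace X] [MeasurableSpace Y]
variable {μ : Measure X} {ν : Measure Y} [IsProbabilityMeasure μ] [IsProbabilityMeasure ν]
variable {π : X → Y} {κ : Kernel Y X} [IsMarkovKernel κ]

lemma map_pi_eq (hπ : Measurable π) (hμ : μ = ν.bind fun y => κ y)
    (hsupp : ∀ᵐ y ∂ν, ∀ᵐ x ∂κ y, π x = y) : μ.map π = ν := by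
  ext B hB
  rw [Measure.map_apply hπ hB, hμ, Measure.bind_apply (hπ hB) (Kernel.measurable κ).aemeasurable]
  have hae : ∀ᵐ y ∂ν, κ y (π ⁻¹' B) = B.indicator (fun _ => (1 : ℝ≥0∞)) y := by
    filter_upwards [hsupp] with y hy
    by_cases hyB : y ∈ B
    · have hc : κ y (π ⁻¹' B)ᶜ = 0 := by
        refine measure_mono_null (fun x hx => ?_) (ae_iff.mp hy)
        simp only [Set.mem_compl_iff, Set.mem_preimage] at hx
        simp only [Set.mem_setOf_eq]
        exact fun h => hx (h ▸ hyB)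
      rw [Set.indicator_of_mem hyB]
      exact (prob_compl_eq_zero_iff (hπ hB)).mp hc
    · rw [Set.indicator_of_notMem hyB]
      refine measure_mono_null (fun x hx => ?_) (ae_iff.mp hy)
      simp only [Set.mem_preimage] at hx
      simp only [Set.mem_setOf_eq]
      exact fun h => hyB (h ▸ hx)
  rw [lintegral_congr_ae hae, lintegral_indicator hB]
  simp

lemma setIntegral_bind_eq (hπ : Measurable π) (hμ : μ = ν.bind fun y => κ y)
    (hsupp : ∀ᵐ y ∂ν, ∀ᵐ x ∂κ y, π x = y)
    {F : X → ℂ} (hFi : Integrable F μ) {B : Set Y} (hB : MeasurableSet B) :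
    ∫ y in B, (∫ x, F x ∂κ y) ∂ν = ∫ x, (π ⁻¹' B).indicator F x ∂μ := by
  have hFiInd : Integrable ((π ⁻¹' B).indicator F) μ := hFi.indicator (hπ hB)
  rw [hμ] at hFiInd
  rw [hμ, NWMaux.integral_bind_kernel ν κ hFiInd, ← integral_indicator hB]
  refine integral_congr_ae ?_
  filter_upwards [hsupp] with y hy
  by_cases hyB : y ∈ B
  · rw [Set.indicator_of_mem hyB]
    refine integral_congr_ae ?_
    filter_upwards [hy] with x hx
    rw [Set.indicator_of_mem]
    simpa [Set.mem_preimage, hx] using hyB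
  · rw [Set.indicator_of_notMem hyB, ← integral_zero X ℂ]
    refine integral_congr_ae ?_
    filter_upwards [hy] with x hx
    rw [Set.indicator_of_notMem]
    simpa [Set.mem_preimage, hx] using hyB

lemma kernel_transfer (hπ : Measurable π) (hμ : μ = ν.bind fun y => κ y)
    (hsupp : ∀ᵐ y ∂ν, ∀ᵐ x ∂κ y, π x = y)
    {τ : X → X} (hτ : MeasurePreserving τ μ μ)
    {σ : Y → Y} (hσ : MeasurePreserving σ ν ν)
    (hfacτ : ∀ x, π (τ x) = σ (π x))
    {σ' : Y → Y} (hσ' : Measurable σ')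
    (hid : ∀ B : Set Y, MeasurableSet B →
      ((fun x => σ' (σ (π x))) ⁻¹' B : Set X) =ᵐ[μ] π ⁻¹' B)
    {F : X → ℂ} (hFm : Measurable F) (hFi : Integrable F μ) :
    (fun y => ∫ x, F (τ x) ∂κ y) =ᵐ[ν] fun y => ∫ x, F x ∂κ (σ y) := by
  have hmap : μ.map π = ν := map_pi_eq hπ hμ hsupp
  set G : Y → ℂ := fun y => ∫ x, F x ∂κ y with hG
  have hGm : StronglyMeasurable G :=
    NWMaux.stronglyMeasurable_kernel_integral κ hFm.stronglyMeasurable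
  have hFτi : Integrable (fun x => F (τ x)) μ :=
    (hτ.integrable_comp hFi.aestronglyMeasurable).mpr hFi
  have hFτm : Measurable (fun x => F (τ x)) := hFm.comp hτ.measurable
  have hGτm : StronglyMeasurable (fun y => ∫ x, F (τ x) ∂κ y) :=
    NWMaux.stronglyMeasurable_kernel_integral κ hFτm.stronglyMeasurable
  have hGi : Integrable G ν := by
    refine Integrable.mono' (NWMaux.integrable_fiber_of_bind ν κ (hμ ▸ hFi)).2
      hGm.aestronglyMeasurable (Filter.Eventually.of_forall fun y => ?_)
    exact norm_integral_le_integral_norm _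
  have hGτi : Integrable (fun y => ∫ x, F (τ x) ∂κ y) ν := by
    refine Integrable.mono' (NWMaux.integrable_fiber_of_bind ν κ (hμ ▸ hFτi)).2
      hGτm.aestronglyMeasurable (Filter.Eventually.of_forall fun y => ?_)
    exact norm_integral_le_integral_norm _
  have hGσi : Integrable (fun y => G (σ y)) ν :=
    (hσ.integrable_comp hGm.aestronglyMeasurable).mpr hGi
  refine ae_eq_of_forall_setIntegral_eq_of_sigmaFinite
    (fun s hs _ => hGτi.integrableOn) (fun s hs _ => hGσi.integrableOn) ?_
  intro B hB _
  have hB' : MeasurableSet (σ' ⁻¹' B) := hσ' hB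
  have hs : MeasurableSet (π ⁻¹' (σ' ⁻¹' B)) := hπ hB'
  -- iff transfer on ν
  have hiffν : ∀ᵐ y ∂ν, (σ' (σ y) ∈ B ↔ y ∈ B) := by
    have hms : MeasurableSet {y | σ' (σ y) ∈ B ↔ y ∈ B} := by
      have h1 : MeasurableSet ((fun y => σ' (σ y)) ⁻¹' B) := (hσ'.comp hσ.measurable) hB
      have he : {y | σ' (σ y) ∈ B ↔ y ∈ B} =
          (((fun y => σ' (σ y)) ⁻¹' B) ∩ B) ∪ ((((fun y => σ' (σ y)) ⁻¹' B))ᶜ ∩ Bᶜ) := by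
        ext y
        simp only [Set.mem_setOf_eq, Set.mem_union, Set.mem_inter_iff, Set.mem_compl_iff,
          Set.mem_preimage]
        tauto
      rw [he]
      exact (h1.inter hB).union (h1.compl.inter hB.compl)
    rw [← hmap, ae_map_iff hπ.aemeasurable hms]
    have := eventuallyEq_set.mp (hid B hB)
    filter_upwards [this] with x hx
    simpa [Set.mem_preimage] using hx
  have hiffμ : ∀ᵐ x ∂μ, (σ' (σ (π x)) ∈ B ↔ π x ∈ B) := by
    have := eventuallyEq_set.mp (hid B hB)
    filter_upwards [this] with x hx
    simpa [Set.mem_preimage] using hx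
  calc ∫ y in B, ∫ x, F (τ x) ∂κ y ∂ν
      = ∫ x, (π ⁻¹' B).indicator (fun x => F (τ x)) x ∂μ :=
        setIntegral_bind_eq hπ hμ hsupp hFτi hB
    _ = ∫ x, (π ⁻¹' (σ' ⁻¹' B)).indicator F (τ x) ∂μ := by
        refine integral_congr_ae ?_
        filter_upwards [hiffμ] with x hx
        by_cases hxB : π x ∈ B
        · rw [Set.indicator_of_mem (by simpa [Set.mem_preimage] using hxB),
            Set.indicator_of_mem]
          simp only [Set.mem_preimage, hfacτ x]
          exact hx.mpr hxB
        · rw [Set.indicator_of_notMem (by simpa [Set.mem_preimage] using hxB),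
            Set.indicator_of_notMem]
          simp only [Set.mem_preimage, hfacτ x]
          exact fun h => hxB (hx.mp h)
    _ = ∫ x, (π ⁻¹' (σ' ⁻¹' B)).indicator F x ∂μ := by
        conv_rhs => rw [← hτ.map_eq]
        rw [integral_map hτ.measurable.aemeasurable]
        rw [hτ.map_eq]
        exact (hFm.indicator hs).aestronglyMeasurable
    _ = ∫ y in σ' ⁻¹' B, G y ∂ν := (setIntegral_bind_eq hπ hμ hsupp hFi hB').symm
    _ = ∫ y, (σ' ⁻¹' B).indicator G y ∂ν := (integral_indicator hB').symm
    _ = ∫ y, (σ' ⁻¹' B).indicator G (σ y) ∂ν := by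
        conv_lhs => rw [← hσ.map_eq]
        rw [integral_map hσ.measurable.aemeasurable]
        rw [hσ.map_eq]
        exact (hGm.indicator hB').aestronglyMeasurable
    _ = ∫ y, B.indicator (fun y => G (σ y)) y ∂ν := by
        refine integral_congr_ae ?_
        filter_upwards [hiffν] with y hy
        by_cases hyB : y ∈ B
        · rw [Set.indicator_of_mem hyB, Set.indicator_of_mem]
          simpa [Set.mem_preimage] using hy.mpr hyB
        · rw [Set.indicator_of_notMem hyB, Set.indicator_of_notMem]
          simp only [Set.mem_preimage]
          exact fun h => hyB (hy.mp h)
    _ = ∫ y in B, G (σ y) ∂ν := integral_indicator hB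

lemma kernel_set_transfer (hπ : Measurable π) (hμ : μ = ν.bind fun y => κ y)
    (hsupp : ∀ᵐ y ∂ν, ∀ᵐ x ∂κ y, π x = y)
    {τ : X → X} (hτ : MeasurePreserving τ μ μ)
    {σ : Y → Y} (hσ : MeasurePreserving σ ν ν)
    (hfacτ : ∀ x, π (τ x) = σ (π x))
    {σ' : Y → Y} (hσ' : Measurable σ')
    (hid : ∀ B : Set Y, MeasurableSet B →
      ((fun x => σ' (σ (π x))) ⁻¹' B : Set X) =ᵐ[μ] π ⁻¹' B)
    {A : Set X} (hA : MeasurableSet A) :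
    (fun y => κ y (τ ⁻¹' A)) =ᵐ[ν] fun y => κ (σ y) A := by
  have hFm : Measurable (A.indicator (fun _ => (1 : ℂ))) :=
    measurable_const.indicator hA
  have hFi : Integrable (A.indicator (fun _ => (1 : ℂ))) μ :=
    (integrable_const (1 : ℂ)).indicator hA
  have h := kernel_transfer hπ hμ hsupp hτ hσ hfacτ hσ' hid hFm hFi
  filter_upwards [h] with y hy
  have h1 : ∫ x, A.indicator (fun _ => (1 : ℂ)) (τ x) ∂κ y
      = ((κ y (τ ⁻¹' A)).toReal : ℂ) := by
    have : (fun x => A.indicator (fun _ => (1 : ℂ)) (τ x))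
        = (τ ⁻¹' A).indicator (fun _ => (1 : ℂ)) := by
      funext x
      by_cases hx : τ x ∈ A
      · rw [Set.indicator_of_mem hx, Set.indicator_of_mem (by simpa [Set.mem_preimage] using hx)]
      · rw [Set.indicator_of_notMem hx,
          Set.indicator_of_notMem (by simpa [Set.mem_preimage] using hx)]
    rw [this, integral_indicator_const (1 : ℂ) (hτ.measurable hA)]
    simp
    rfl
  have h2 : ∫ x, A.indicator (fun _ => (1 : ℂ)) x ∂κ (σ y)
      = ((κ (σ y) A).toReal : ℂ) := by
    rw [integral_indicator_const (1 : ℂ) hA]; simp; rfl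
  rw [h1, h2] at hy
  have := Complex.ofReal_inj.mp hy
  exact (ENNReal.toReal_eq_toReal_iff' (measure_ne_top _ _) (measure_ne_top _ _)).mp this

end NWMaux2

set_option maxHeartbeats 3000000 in
/-- If `f` with `E(f|Y) = 0` is not relatively weakly mixing (all conditional
autocorrelations have `‖E((T^γ)*f·f̄|Y)‖²_{L²(Y)} ≥ ε`), then the minimal-norm element `K`
of the closed convex hull of the orbit of `f ⊗ f̄` in `L²(X ×_Y X)` is `Γ`-invariant and
non-zero, with `‖K‖² ≥ ε`. Here `X ×_Y X` carries the relatively independent product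
measure `∫ κ y × κ y dν(y)`. -/
theorem nonWeaklyMixing_invariant_kernel
    {X Y : Type*} [MeasurableSpace X] [MeasurableSpace Y]
    (μ : Measure X) (ν : Measure Y) [IsProbabilityMeasure μ] [IsProbabilityMeasure ν]
    (π : X → Y) (hπ : Measurable π)
    (κ : Kernel Y X) [IsMarkovKernel κ]
    (hμ : μ = ν.bind fun y => κ y)
    (hsupp : ∀ᵐ y ∂ν, ∀ᵐ x ∂κ y, π x = y)
    {Γ : Type*} [Group Γ] (T : Γ → X → X)
    (hT : ∀ γ, MeasurePreserving (T γ) μ μ)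
    (hTmul : ∀ γ₁ γ₂ : Γ, ∀ x, T (γ₁ * γ₂) x = T γ₂ (T γ₁ x))
    (Sa : Γ → Y → Y) (hSa : ∀ γ, MeasurePreserving (Sa γ) ν ν)
    (hfac : ∀ γ x, π (T γ x) = Sa γ (π x))
    (f : X → ℂ) (hfm : Measurable f) (hfL2 : MemLp f 2 μ)
    (hfE : ∀ᵐ y ∂ν, ∫ x, f x ∂κ y = 0)
    (ε : ℝ) (hε : 0 < ε)
    (hnwm : ∀ γ : Γ, ε ≤ ∫ y, ‖∫ x, f (T γ x) * (starRingEnd ℂ) (f x) ∂κ y‖ ^ 2 ∂ν) :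
    ∃ K : X × X → ℂ,
      MemLp K 2 (ν.bind fun y => (κ y).prod (κ y)) ∧
      (∀ δ : ℝ, 0 < δ → ∃ (n : ℕ) (γ : Fin n → Γ) (w : Fin n → ℝ),
        (∀ i, 0 ≤ w i) ∧ (∑ i, w i) = 1 ∧
        eLpNorm (fun p : X × X => K p -
            ∑ i, (w i : ℂ) * (f (T (γ i) p.1) * (starRingEnd ℂ) (f (T (γ i) p.2)))) 2
          (ν.bind fun y => (κ y).prod (κ y)) < ENNReal.ofReal δ) ∧
      (∀ K' : X × X → ℂ,
        MemLp K' 2 (ν.bind fun y => (κ y).prod (κ y)) →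
        (∀ δ : ℝ, 0 < δ → ∃ (n : ℕ) (γ : Fin n → Γ) (w : Fin n → ℝ),
          (∀ i, 0 ≤ w i) ∧ (∑ i, w i) = 1 ∧
          eLpNorm (fun p : X × X => K' p -
              ∑ i, (w i : ℂ) * (f (T (γ i) p.1) * (starRingEnd ℂ) (f (T (γ i) p.2)))) 2
            (ν.bind fun y => (κ y).prod (κ y)) < ENNReal.ofReal δ) →
        eLpNorm K 2 (ν.bind fun y => (κ y).prod (κ y)) ≤
          eLpNorm K' 2 (ν.bind fun y => (κ y).prod (κ y))) ∧
      (∀ γ : Γ, (fun p : X × X => K (T γ p.1, T γ p.2))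
          =ᵐ[ν.bind fun y => (κ y).prod (κ y)] K) ∧
      ENNReal.ofReal ε ≤ (eLpNorm K 2 (ν.bind fun y => (κ y).prod (κ y))) ^ 2 := by
  classical
  -- the relatively independent product measure
  set M : Measure (X × X) := ν.bind fun y => (κ y).prod (κ y) with hM
  have hMeq : M = ν.bind fun y => (κ ×ₖ κ) y := by
    rw [hM]; congr 1; funext y; rw [Kernel.prod_apply]
  haveI hMprob : IsProbabilityMeasure M := by
    rw [hMeq, NWMaux.bind_eq_snd_compProd]
    exact Measure.isProbabilityMeasure_map measurable_snd.aemeasurable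
  -- group action basics
  have hTT : ∀ x, T 1 (T 1 x) = T 1 x := by
    intro x
    have := hTmul 1 1 x
    rw [one_mul] at this
    exact this.symm
  have hf1 : (fun x => f (T 1 x)) =ᵐ[μ] f := NWMaux.comp_ae_eq_of_idem (hT 1) hTT hfm
  have hcomp : ∀ (γ : Γ) (x : X), Sa γ⁻¹ (Sa γ (π x)) = π (T 1 x) := by
    intro γ x
    rw [← hfac γ x, ← hfac γ⁻¹ (T γ x), ← hTmul γ γ⁻¹ x, mul_inv_cancel]
  have hid : ∀ (γ : Γ) (B : Set Y), MeasurableSet B →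
      ((fun x => Sa γ⁻¹ (Sa γ (π x))) ⁻¹' B : Set X) =ᵐ[μ] π ⁻¹' B := by
    intro γ B hB
    have h1 : ((fun x => Sa γ⁻¹ (Sa γ (π x))) ⁻¹' B : Set X) = (T 1) ⁻¹' (π ⁻¹' B) := by
      ext x; simp [Set.mem_preimage, hcomp γ x]
    rw [h1]
    exact NWMaux.preimage_ae_eq_of_idem (hT 1) hTT (hπ hB)
  have htransfer : ∀ (γ : Γ) (F : X → ℂ), Measurable F → Integrable F μ →
      (fun y => ∫ x, F (T γ x) ∂κ y) =ᵐ[ν] fun y => ∫ x, F x ∂κ (Sa γ y) := by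
    intro γ F hFm hFi
    exact NWMaux2.kernel_transfer hπ hμ hsupp (hT γ) (hSa γ) (hfac γ)
      (hSa γ⁻¹).measurable (hid γ) hFm hFi
  have hsettransfer : ∀ (γ : Γ) (A : Set X), MeasurableSet A →
      (fun y => κ y ((T γ) ⁻¹' A)) =ᵐ[ν] fun y => κ (Sa γ y) A := by
    intro γ A hA
    exact NWMaux2.kernel_set_transfer hπ hμ hsupp (hT γ) (hSa γ) (hfac γ)
      (hSa γ⁻¹).measurable (hid γ) hA
  -- the diagonal action preserves M
  have hdiagmeas : ∀ γ : Γ, Measurable (fun p : X × X => (T γ p.1, T γ p.2)) :=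
    fun γ => ((hT γ).measurable.comp measurable_fst).prodMk
      ((hT γ).measurable.comp measurable_snd)
  have hdiagMP : ∀ γ : Γ, MeasurePreserving (fun p : X × X => (T γ p.1, T γ p.2)) M M := by
    intro γ
    refine ⟨hdiagmeas γ, ?_⟩
    haveI : IsProbabilityMeasure (M.map (fun p : X × X => (T γ p.1, T γ p.2))) :=
      Measure.isProbabilityMeasure_map (hdiagmeas γ).aemeasurable
    have hMrect : ∀ (A B : Set X), MeasurableSet A → MeasurableSet B →
        M (A ×ˢ B) = ∫⁻ y, κ y A * κ y B ∂ν := by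
      intro A B hA hB
      rw [hMeq, Measure.bind_apply (hA.prod hB) (Kernel.measurable _).aemeasurable]
      refine lintegral_congr fun y => ?_
      rw [Kernel.prod_apply, Measure.prod_prod]
    refine MeasureTheory.ext_of_generate_finite _ generateFrom_prod.symm isPiSystem_prod ?_ ?_
    · rintro s ⟨A, hA, B, hB, rfl⟩
      simp only [Set.mem_setOf_eq] at hA hB
      rw [Measure.map_apply (hdiagmeas γ) (hA.prod hB)]
      have hpre : (fun p : X × X => (T γ p.1, T γ p.2)) ⁻¹' (A ×ˢ B)
          = ((T γ) ⁻¹' A) ×ˢ ((T γ) ⁻¹' B) := rfl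
      rw [hpre, hMrect _ _ ((hT γ).measurable hA) ((hT γ).measurable hB), hMrect _ _ hA hB]
      have h1 := hsettransfer γ A hA
      have h2 := hsettransfer γ B hB
      have hae : (fun y => κ y ((T γ) ⁻¹' A) * κ y ((T γ) ⁻¹' B))
          =ᵐ[ν] fun y => κ (Sa γ y) A * κ (Sa γ y) B := by
        filter_upwards [h1, h2] with y hy1 hy2
        rw [hy1, hy2]
      rw [lintegral_congr_ae hae]
      have hum : Measurable (fun y => κ y A * κ y B) :=
        (Kernel.measurable_coe κ hA).mul (Kernel.measurable_coe κ hB)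
      calc ∫⁻ y, κ (Sa γ y) A * κ (Sa γ y) B ∂ν
          = ∫⁻ y, (fun y => κ y A * κ y B) y ∂(ν.map (Sa γ)) :=
            (lintegral_map hum (hSa γ).measurable).symm
        _ = ∫⁻ y, κ y A * κ y B ∂ν := by rw [(hSa γ).map_eq]
    · simp [measure_univ]
  -- orbit functions
  set g : Γ → X × X → ℂ := fun γ p => f (T γ p.1) * (starRingEnd ℂ) (f (T γ p.2)) with hgdef
  have hgm : ∀ γ, Measurable (g γ) := by
    intro γ
    have h1 : Measurable fun p : X × X => f (T γ p.1) :=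
      hfm.comp ((hT γ).measurable.comp measurable_fst)
    have h2 : Measurable fun p : X × X => f (T γ p.2) :=
      hfm.comp ((hT γ).measurable.comp measurable_snd)
    exact h1.mul (RCLike.continuous_conj.measurable.comp h2)
  have hfTL2 : ∀ γ : Γ, MemLp (fun x => f (T γ x)) 2 μ :=
    fun γ => hfL2.comp_measurePreserving (hT γ)
  have hIntMulμ : ∀ (u v : X → ℂ), MemLp u 2 μ → MemLp v 2 μ →
      Integrable (fun x => u x * (starRingEnd ℂ) (v x)) μ := by
    intro u v hu hv
    have h := L2.integrable_inner (𝕜 := ℂ) (hv.toLp v) (hu.toLp u)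
    refine h.congr ?_
    filter_upwards [hv.coeFn_toLp, hu.coeFn_toLp] with x h1 h2
    rw [RCLike.inner_apply, h1, h2, mul_comm]
  -- the function a and its square-integrability
  set a : Y → ℝ := fun y => ∫ x, ‖f x‖ ^ 2 ∂κ y with hadef
  have hfsqInt : Integrable (fun x => ‖f x‖ ^ 2) μ := hfL2.norm.integrable_sq
  have ham : StronglyMeasurable a :=
    NWMaux.stronglyMeasurable_kernel_integral κ (hfm.norm.pow_const 2).stronglyMeasurable
  have haz : ∀ y, 0 ≤ a y := fun y => integral_nonneg fun x => sq_nonneg _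
  have hmulconj : ∀ z : ℂ, z * (starRingEnd ℂ) z = ((‖z‖ ^ 2 : ℝ) : ℂ) := by
    intro z
    rw [RCLike.mul_conj]
    norm_cast
  have hψ1 : (fun y => ∫ x, f (T 1 x) * (starRingEnd ℂ) (f x) ∂κ y)
      =ᵐ[ν] fun y => ((a y : ℝ) : ℂ) := by
    have hae := NWMaux.ae_ae_of_ae_bind ν κ (p := fun x => f (T 1 x) = f x) (hμ ▸ hf1)
    filter_upwards [hae] with y hy
    have h1 : ∫ x, f (T 1 x) * (starRingEnd ℂ) (f x) ∂κ y
        = ∫ x, f x * (starRingEnd ℂ) (f x) ∂κ y := by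
      refine integral_congr_ae ?_
      filter_upwards [hy] with x hx
      rw [hx]
    rw [h1]
    simp only [hmulconj]
    exact integral_ofReal
  have hψ1Int : Integrable
      (fun y => ‖∫ x, f (T 1 x) * (starRingEnd ℂ) (f x) ∂κ y‖ ^ 2) ν := by
    by_contra hcon
    have h := hnwm 1
    rw [integral_undef hcon] at h
    linarith
  have ha2 : Integrable (fun y => a y ^ 2) ν := by
    refine hψ1Int.congr ?_
    filter_upwards [hψ1] with y hy
    rw [hy, Complex.norm_real, Real.norm_eq_abs, sq_abs]
  -- transfer of the fiberwise L² mass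
  have hq : ∀ γ : Γ, (fun y => ∫ x, ‖f (T γ x)‖ ^ 2 ∂κ y) =ᵐ[ν] fun y => a (Sa γ y) := by
    intro γ
    have hFm : Measurable (fun x => ((‖f x‖ ^ 2 : ℝ) : ℂ)) :=
      Complex.measurable_ofReal.comp (hfm.norm.pow_const 2)
    have hFi : Integrable (fun x => ((‖f x‖ ^ 2 : ℝ) : ℂ)) μ := hfsqInt.ofReal
    have h := htransfer γ _ hFm hFi
    filter_upwards [h] with y hy
    have e1 : ∫ x, ((‖f (T γ x)‖ ^ 2 : ℝ) : ℂ) ∂κ y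
        = ((∫ x, ‖f (T γ x)‖ ^ 2 ∂κ y : ℝ) : ℂ) := integral_ofReal
    have e2 : ∫ x, ((‖f x‖ ^ 2 : ℝ) : ℂ) ∂κ (Sa γ y)
        = ((∫ x, ‖f x‖ ^ 2 ∂κ (Sa γ y) : ℝ) : ℂ) := integral_ofReal
    rw [e1, e2] at hy
    exact_mod_cast hy
  -- orbit functions are in L²(M)
  have hgL2 : ∀ γ : Γ, MemLp (g γ) 2 M := by
    intro γ
    refine (memLp_two_iff_integrable_sq_norm (hgm γ).aestronglyMeasurable).mpr ?_
    have hnormeq : (fun p : X × X => ‖g γ p‖ ^ 2)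
        = fun p => ‖f (T γ p.1)‖ ^ 2 * ‖f (T γ p.2)‖ ^ 2 := by
      funext p
      rw [hgdef]
      simp only [norm_mul, RCLike.norm_conj, mul_pow]
    rw [hnormeq, hMeq]
    have hu : Integrable (fun x => ‖f (T γ x)‖ ^ 2) μ := (hfTL2 γ).norm.integrable_sq
    have hum : Measurable (fun x => ‖f (T γ x)‖ ^ 2) :=
      (hfm.comp (hT γ).measurable).norm.pow_const 2
    have hfib := NWMaux.integrable_fiber_of_bind ν κ (hμ ▸ hu)
    refine NWMaux.integrable_bind_of_fiber ν (κ ×ₖ κ)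
      ((hum.comp measurable_fst).mul (hum.comp measurable_snd)) ?_ ?_
    · filter_upwards [hfib.1] with y hy
      rw [Kernel.prod_apply]
      exact hy.mul_prod hy
    · have hval : ∀ y, (∫ p : X × X, ‖‖f (T γ p.1)‖ ^ 2 * ‖f (T γ p.2)‖ ^ 2‖ ∂(κ ×ₖ κ) y)
          = (∫ x, ‖f (T γ x)‖ ^ 2 ∂κ y) ^ 2 := by
        intro y
        rw [Kernel.prod_apply]
        have hpt : ∀ p : X × X, ‖‖f (T γ p.1)‖ ^ 2 * ‖f (T γ p.2)‖ ^ 2‖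
            = ‖f (T γ p.1)‖ ^ 2 * ‖f (T γ p.2)‖ ^ 2 := fun p =>
          Real.norm_of_nonneg (mul_nonneg (sq_nonneg _) (sq_nonneg _))
        simp only [hpt]
        rw [integral_prod_mul (μ := κ y) (ν := κ y)
          (fun x => ‖f (T γ x)‖ ^ 2) (fun x => ‖f (T γ x)‖ ^ 2), sq]
      simp only [hval]
      refine Integrable.congr (f := fun y => a (Sa γ y) ^ 2) ?_ ?_
      · exact ((hSa γ).integrable_comp
          ((ham.measurable.pow_const 2).aestronglyMeasurable)).mpr ha2
      · filter_upwards [hq γ] with y hy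
        rw [← hy]
  have hIntMulM : ∀ (u v : X × X → ℂ), MemLp u 2 M → MemLp v 2 M →
      Integrable (fun p => u p * (starRingEnd ℂ) (v p)) M := by
    intro u v hu hv
    have h := L2.integrable_inner (𝕜 := ℂ) (hv.toLp v) (hu.toLp u)
    refine h.congr ?_
    filter_upwards [hv.coeFn_toLp, hu.coeFn_toLp] with x h1 h2
    rw [RCLike.inner_apply, h1, h2, mul_comm]
  -- the Lp elements attached to the orbit functions
  set G : Γ → Lp ℂ 2 M := fun γ => (hgL2 γ).toLp (g γ) with hGdef
  -- the fundamental lower bound for inner products of orbit elements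
  have hpair : ∀ b c : Γ, ε ≤ RCLike.re (inner (𝕜 := ℂ) (G b) (G c)) := by
    intro b c
    set cγ : Γ := b⁻¹ * c with hcγ
    set φ : Y → ℂ := fun y => ∫ x, f (T c x) * (starRingEnd ℂ) (f (T b x)) ∂κ y with hφ
    set ψ : Y → ℂ := fun y => ∫ x, f (T cγ x) * (starRingEnd ℂ) (f x) ∂κ y with hψ
    have hIntM : Integrable (fun p => (starRingEnd ℂ) (g b p) * g c p) M := by
      have h := hIntMulM (g c) (g b) (hgL2 c) (hgL2 b)
      exact h.congr (Filter.Eventually.of_forall fun p => by ring)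
    have hfibval : ∀ y, (∫ p : X × X, (starRingEnd ℂ) (g b p) * g c p ∂(κ ×ₖ κ) y)
        = φ y * (starRingEnd ℂ) (φ y) := by
      intro y
      rw [Kernel.prod_apply]
      have hpt : ∀ p : X × X, (starRingEnd ℂ) (g b p) * g c p
          = (fun x => f (T c x) * (starRingEnd ℂ) (f (T b x))) p.1 *
            (fun x => (starRingEnd ℂ) (f (T c x) * (starRingEnd ℂ) (f (T b x)))) p.2 := by
        intro p
        simp only [hgdef, map_mul, Complex.conj_conj]
        ring
      calc ∫ p : X × X, (starRingEnd ℂ) (g b p) * g c p ∂((κ y).prod (κ y))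
          = ∫ p : X × X, (fun x => f (T c x) * (starRingEnd ℂ) (f (T b x))) p.1 *
              (fun x => (starRingEnd ℂ) (f (T c x) * (starRingEnd ℂ) (f (T b x)))) p.2
              ∂((κ y).prod (κ y)) := integral_congr_ae (Filter.Eventually.of_forall hpt)
        _ = (∫ x, f (T c x) * (starRingEnd ℂ) (f (T b x)) ∂κ y) *
              ∫ x, (starRingEnd ℂ) (f (T c x) * (starRingEnd ℂ) (f (T b x))) ∂κ y :=
            integral_prod_mul (μ := κ y) (ν := κ y)
              (fun x => f (T c x) * (starRingEnd ℂ) (f (T b x)))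
              (fun x => (starRingEnd ℂ) (f (T c x) * (starRingEnd ℂ) (f (T b x))))
        _ = φ y * (starRingEnd ℂ) (φ y) := by
            congr 1
            exact integral_conj
    have hinner : inner (𝕜 := ℂ) (G b) (G c) = ∫ y, φ y * (starRingEnd ℂ) (φ y) ∂ν := by
      rw [hGdef, L2.inner_def]
      have h1 : (∫ p, inner (𝕜 := ℂ) (((hgL2 b).toLp (g b)) p) (((hgL2 c).toLp (g c)) p) ∂M)
          = ∫ p, (starRingEnd ℂ) (g b p) * g c p ∂M := by
        refine integral_congr_ae ?_
        filter_upwards [(hgL2 b).coeFn_toLp, (hgL2 c).coeFn_toLp] with p h1 h2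
        rw [RCLike.inner_apply, h1, h2, mul_comm]
      rw [h1, hMeq, NWMaux.integral_bind_kernel ν (κ ×ₖ κ) (hMeq ▸ hIntM)]
      simp only [hfibval]
    have hφci : Integrable (fun y => φ y * (starRingEnd ℂ) (φ y)) ν := by
      have hfib2 := (NWMaux.integrable_fiber_of_bind ν (κ ×ₖ κ) (hMeq ▸ hIntM)).2
      have hGm2 : StronglyMeasurable fun y =>
          ∫ p, (starRingEnd ℂ) (g b p) * g c p ∂(κ ×ₖ κ) y :=
        NWMaux.stronglyMeasurable_kernel_integral _
          (((RCLike.continuous_conj.measurable.comp (hgm b)).mul (hgm c)).stronglyMeasurable)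
      have hGi2 : Integrable (fun y =>
          ∫ p, (starRingEnd ℂ) (g b p) * g c p ∂(κ ×ₖ κ) y) ν :=
        Integrable.mono' hfib2 hGm2.aestronglyMeasurable
          (Filter.Eventually.of_forall fun y => norm_integral_le_integral_norm _)
      exact hGi2.congr (Filter.Eventually.of_forall hfibval)
    have hre : RCLike.re (inner (𝕜 := ℂ) (G b) (G c)) = ∫ y, ‖φ y‖ ^ 2 ∂ν := by
      rw [hinner, ← integral_re hφci]
      refine integral_congr_ae (Filter.Eventually.of_forall fun y => ?_)
      show RCLike.re (φ y * (starRingEnd ℂ) (φ y)) = ‖φ y‖ ^ 2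
      rw [hmulconj]
      exact RCLike.ofReal_re _
    have hF'm : Measurable (fun x => f (T cγ x) * (starRingEnd ℂ) (f (T 1 x))) :=
      (hfm.comp (hT cγ).measurable).mul
        (RCLike.continuous_conj.measurable.comp (hfm.comp (hT 1).measurable))
    have hF'i : Integrable (fun x => f (T cγ x) * (starRingEnd ℂ) (f (T 1 x))) μ :=
      hIntMulμ _ _ (hfTL2 cγ) (hfTL2 1)
    have htr := htransfer b _ hF'm hF'i
    have hFb : ∀ x, f (T cγ (T b x)) * (starRingEnd ℂ) (f (T 1 (T b x)))
        = f (T c x) * (starRingEnd ℂ) (f (T b x)) := by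
      intro x
      rw [← hTmul b cγ x, ← hTmul b 1 x, mul_one, hcγ, mul_inv_cancel_left]
    have htr' : φ =ᵐ[ν]
        fun y => ∫ x, f (T cγ x) * (starRingEnd ℂ) (f (T 1 x)) ∂κ (Sa b y) := by
      refine Filter.EventuallyEq.trans (Filter.Eventually.of_forall fun y => ?_) htr
      exact integral_congr_ae (Filter.Eventually.of_forall fun x => (hFb x).symm)
    have hψ'ψ : (fun y => ∫ x, f (T cγ x) * (starRingEnd ℂ) (f (T 1 x)) ∂κ y) =ᵐ[ν] ψ := by
      have hae := NWMaux.ae_ae_of_ae_bind ν κ (p := fun x => f (T 1 x) = f x) (hμ ▸ hf1)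
      filter_upwards [hae] with y hy
      refine integral_congr_ae ?_
      filter_upwards [hy] with x hx
      rw [hx]
    have hcompσ : (fun y => ∫ x, f (T cγ x) * (starRingEnd ℂ) (f (T 1 x)) ∂κ (Sa b y))
        =ᵐ[ν] fun y => ψ (Sa b y) := by
      exact MeasureTheory.ae_eq_comp (f := Sa b)
        (g := fun y => ∫ x, f (T cγ x) * (starRingEnd ℂ) (f (T 1 x)) ∂κ y) (g' := ψ)
        (hSa b).measurable.aemeasurable
        (by rw [(hSa b).map_eq]; exact hψ'ψ)
    have hφψ : φ =ᵐ[ν] fun y => ψ (Sa b y) := htr'.trans hcompσ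
    have hψm : StronglyMeasurable ψ :=
      NWMaux.stronglyMeasurable_kernel_integral κ
        ((hfm.comp (hT cγ).measurable).mul
          (RCLike.continuous_conj.measurable.comp hfm)).stronglyMeasurable
    have hnorm : ∫ y, ‖φ y‖ ^ 2 ∂ν = ∫ y, ‖ψ y‖ ^ 2 ∂ν := by
      have h1 : ∫ y, ‖φ y‖ ^ 2 ∂ν = ∫ y, ‖ψ (Sa b y)‖ ^ 2 ∂ν := by
        refine integral_congr_ae ?_
        filter_upwards [hφψ] with y hy
        rw [hy]
      rw [h1]
      have h2 : AEStronglyMeasurable (fun y => ‖ψ y‖ ^ 2) (ν.map (Sa b)) := by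
        rw [(hSa b).map_eq]
        exact (hψm.measurable.norm.pow_const 2).aestronglyMeasurable
      calc ∫ y, ‖ψ (Sa b y)‖ ^ 2 ∂ν
          = ∫ y, ‖ψ y‖ ^ 2 ∂(ν.map (Sa b)) :=
            (integral_map (hSa b).measurable.aemeasurable h2).symm
        _ = ∫ y, ‖ψ y‖ ^ 2 ∂ν := by rw [(hSa b).map_eq]
    rw [hre, hnorm]
    exact hnwm cγ
  -- the convex hull of the orbit, concretely
  set hull : Set (Lp ℂ 2 M) := {c | ∃ (n : ℕ) (γv : Fin n → Γ) (w : Fin n → ℝ),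
    (∀ i, 0 ≤ w i) ∧ (∑ i, w i) = 1 ∧ (∑ i, (w i : ℂ) • G (γv i)) = c} with hhulldef
  have hhne : hull.Nonempty := by
    refine ⟨G 1, 1, fun _ => 1, fun _ => 1, fun i => zero_le_one, by simp, by simp⟩
  have hconvexc : ∀ c₁ ∈ hull, ∀ c₂ ∈ hull, ∀ s t : ℝ, 0 ≤ s → 0 ≤ t → s + t = 1 →
      (s : ℂ) • c₁ + (t : ℂ) • c₂ ∈ hull := by
    rintro c₁ ⟨n₁, γ₁, w₁, hw₁0, hw₁1, rfl⟩ c₂ ⟨n₂, γ₂, w₂, hw₂0, hw₂1, rfl⟩ s t hs ht hst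
    refine ⟨n₁ + n₂, Fin.append γ₁ γ₂,
      Fin.append (fun i => s * w₁ i) (fun i => t * w₂ i), ?_, ?_, ?_⟩
    · intro i
      refine Fin.addCases (fun j => ?_) (fun j => ?_) i
      · rw [Fin.append_left]; exact mul_nonneg hs (hw₁0 j)
      · rw [Fin.append_right]; exact mul_nonneg ht (hw₂0 j)
    · rw [Fin.sum_univ_add]
      simp only [Fin.append_left, Fin.append_right]
      rw [← Finset.mul_sum, ← Finset.mul_sum, hw₁1, hw₂1, mul_one, mul_one, hst]
    · rw [Fin.sum_univ_add]
      simp only [Fin.append_left, Fin.append_right]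
      have e1 : ∀ j : Fin n₁, ((s * w₁ j : ℝ) : ℂ) • G (γ₁ j)
          = (s : ℂ) • ((w₁ j : ℂ) • G (γ₁ j)) := by
        intro j; rw [smul_smul]; push_cast; ring_nf
      have e2 : ∀ j : Fin n₂, ((t * w₂ j : ℝ) : ℂ) • G (γ₂ j)
          = (t : ℂ) • ((w₂ j : ℂ) • G (γ₂ j)) := by
        intro j; rw [smul_smul]; push_cast; ring_nf
      simp only [e1, e2]
      rw [← Finset.smul_sum, ← Finset.smul_sum]
  set S : Set (Lp ℂ 2 M) := closure hull with hSdef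
  have hSconvc : ∀ c₁ ∈ S, ∀ c₂ ∈ S, ∀ s t : ℝ, 0 ≤ s → 0 ≤ t → s + t = 1 →
      (s : ℂ) • c₁ + (t : ℂ) • c₂ ∈ S := by
    intro c₁ h₁ c₂ h₂ s t hs ht hst
    obtain ⟨x, hx, hxlim⟩ := mem_closure_iff_seq_limit.mp h₁
    obtain ⟨y, hy, hylim⟩ := mem_closure_iff_seq_limit.mp h₂
    have hx2 : Filter.Tendsto (fun n => (s : ℂ) • x n + (t : ℂ) • y n) Filter.atTop
        (nhds ((s : ℂ) • c₁ + (t : ℂ) • c₂)) :=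
      (hxlim.const_smul ((s : ℝ) : ℂ)).add (hylim.const_smul ((t : ℝ) : ℂ))
    exact mem_closure_of_tendsto hx2
      (Filter.Eventually.of_forall fun n => hconvexc _ (hx n) _ (hy n) s t hs ht hst)
  letI instR : InnerProductSpace ℝ (Lp ℂ 2 M) := InnerProductSpace.rclikeToReal ℂ _
  have hSclosed : IsClosed S := isClosed_closure
  have hSne : S.Nonempty := hhne.mono subset_closure
  have hSconvex : Convex ℝ S := by
    intro x hx y hy s t hs ht hst
    have h1 : s • x + t • y = (s : ℂ) • x + (t : ℂ) • y := rfl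
    rw [h1]
    exact hSconvc x hx y hy s t hs ht hst
  obtain ⟨K₀, hK₀S, hK₀min⟩ :=
    exists_norm_eq_iInf_of_complete_convex hSne hSclosed.isComplete hSconvex 0
  have hmin : ∀ w ∈ S, ‖K₀‖ ≤ ‖w‖ := by
    intro w hw
    have hle : (⨅ w : S, ‖(0 : Lp ℂ 2 M) - (w : Lp ℂ 2 M)‖) ≤ ‖(0 : Lp ℂ 2 M) - w‖ :=
      ciInf_le ⟨0, Set.forall_mem_range.2 fun _ => norm_nonneg _⟩ (⟨w, hw⟩ : S)
    calc ‖K₀‖ = ‖(0 : Lp ℂ 2 M) - K₀‖ := by rw [zero_sub, norm_neg]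
      _ = ⨅ w : S, ‖(0 : Lp ℂ 2 M) - (w : Lp ℂ 2 M)‖ := hK₀min
      _ ≤ ‖(0 : Lp ℂ 2 M) - w‖ := hle
      _ = ‖w‖ := by rw [zero_sub, norm_neg]
  have huniq : ∀ w ∈ S, ‖w‖ ≤ ‖K₀‖ → w = K₀ := by
    intro w hw hwle
    have hmid : ((1/2 : ℝ) : ℂ) • K₀ + ((1/2 : ℝ) : ℂ) • w ∈ S :=
      hSconvc K₀ hK₀S w hw (1/2) (1/2) (by norm_num) (by norm_num) (by norm_num)
    have hmid2 : ((1/2 : ℝ) : ℂ) • K₀ + ((1/2 : ℝ) : ℂ) • w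
        = ((1/2 : ℝ) : ℂ) • (K₀ + w) := by rw [smul_add]
    have h3 : ‖((1/2 : ℝ) : ℂ) • (K₀ + w)‖ = (1/2) * ‖K₀ + w‖ := by
      rw [norm_smul]
      norm_num
    have hmidnorm : ‖K₀‖ ≤ (1/2) * ‖K₀ + w‖ := by
      have := hmin _ hmid
      rwa [hmid2, h3] at this
    have hpar := parallelogram_law_with_norm ℝ K₀ w
    have h4 : 2 * ‖K₀‖ ≤ ‖K₀ + w‖ := by linarith
    have h5 : 4 * (‖K₀‖ * ‖K₀‖) ≤ ‖K₀ + w‖ * ‖K₀ + w‖ := by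
      nlinarith [norm_nonneg K₀, norm_nonneg (K₀ + w)]
    have h6 : ‖w‖ * ‖w‖ ≤ ‖K₀‖ * ‖K₀‖ := by
      nlinarith [norm_nonneg w, norm_nonneg K₀]
    have hz : ‖K₀ - w‖ * ‖K₀ - w‖ ≤ 0 := by linarith
    have hz0 : ‖K₀ - w‖ = 0 := by nlinarith [norm_nonneg (K₀ - w)]
    have h0 : K₀ - w = 0 := norm_eq_zero.mp hz0
    exact (sub_eq_zero.mp h0).symm
  -- the unitaries
  set U : Γ → (Lp ℂ 2 M →ₗᵢ[ℂ] Lp ℂ 2 M) := fun γ =>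
    Lp.compMeasurePreservingₗᵢ ℂ (fun p : X × X => (T γ p.1, T γ p.2)) (hdiagMP γ) with hUdef
  have hUcoe : ∀ (γ : Γ) (k : Lp ℂ 2 M),
      (U γ k : X × X → ℂ) =ᵐ[M] fun p => k (T γ p.1, T γ p.2) :=
    fun γ k => Lp.coeFn_compMeasurePreserving k (hdiagMP γ)
  have hUG : ∀ γ δ : Γ, U γ (G δ) = G (γ * δ) := by
    intro γ δ
    refine Lp.ext ?_
    have h1 := hUcoe γ (G δ)
    have h4 : (fun p : X × X => (G δ) (T γ p.1, T γ p.2)) =ᵐ[M]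
        fun p => g δ (T γ p.1, T γ p.2) :=
      MeasureTheory.ae_eq_comp (f := fun p : X × X => (T γ p.1, T γ p.2))
        (g := (G δ : X × X → ℂ)) (g' := g δ) (hdiagmeas γ).aemeasurable
        (by rw [(hdiagMP γ).map_eq]; exact (hgL2 δ).coeFn_toLp)
    have h5 : ∀ p : X × X, g δ (T γ p.1, T γ p.2) = g (γ * δ) p := by
      intro p
      simp only [hgdef]
      rw [← hTmul γ δ p.1, ← hTmul γ δ p.2]
    exact h1.trans (h4.trans ((Filter.EventuallyEq.of_eq (funext h5)).trans
      (hgL2 (γ * δ)).coeFn_toLp.symm))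
  have hUcomp : ∀ γ₁ γ₂ : Γ, ∀ k : Lp ℂ 2 M, U γ₁ (U γ₂ k) = U (γ₁ * γ₂) k := by
    intro γ₁ γ₂ k
    refine Lp.ext ?_
    have h1 := hUcoe γ₁ (U γ₂ k)
    have h3 : (fun p : X × X => (U γ₂ k) (T γ₁ p.1, T γ₁ p.2)) =ᵐ[M]
        fun p => k (T γ₂ (T γ₁ p.1), T γ₂ (T γ₁ p.2)) :=
      MeasureTheory.ae_eq_comp (f := fun p : X × X => (T γ₁ p.1, T γ₁ p.2))
        (g := (U γ₂ k : X × X → ℂ)) (g' := fun p : X × X => k (T γ₂ p.1, T γ₂ p.2))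
        (hdiagmeas γ₁).aemeasurable
        (by rw [(hdiagMP γ₁).map_eq]; exact hUcoe γ₂ k)
    have h4 : ∀ p : X × X, k (T γ₂ (T γ₁ p.1), T γ₂ (T γ₁ p.2))
        = k (T (γ₁ * γ₂) p.1, T (γ₁ * γ₂) p.2) := by
      intro p
      rw [← hTmul γ₁ γ₂ p.1, ← hTmul γ₁ γ₂ p.2]
    exact h1.trans (h3.trans ((Filter.EventuallyEq.of_eq (funext h4)).trans
      (hUcoe (γ₁ * γ₂) k).symm))
  have hU1 : ∀ k : Lp ℂ 2 M, U 1 k = k := by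
    intro k
    refine Lp.ext ?_
    have h1 := hUcoe 1 k
    have hasm := Lp.aestronglyMeasurable k
    set k' := hasm.mk (k : X × X → ℂ) with hk'def
    have hk'm : Measurable k' := hasm.stronglyMeasurable_mk.measurable
    have hkk' : (k : X × X → ℂ) =ᵐ[M] k' := hasm.ae_eq_mk
    have hdd : ∀ p : X × X, (fun q : X × X => (T 1 q.1, T 1 q.2))
        ((fun q : X × X => (T 1 q.1, T 1 q.2)) p) = (fun q : X × X => (T 1 q.1, T 1 q.2)) p := by
      intro p
      simp only [hTT]
    have hidem := NWMaux.comp_ae_eq_of_idem (μ := M) (hdiagMP 1) hdd hk'm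
    have h2 : (fun p : X × X => k (T 1 p.1, T 1 p.2)) =ᵐ[M]
        fun p => k' (T 1 p.1, T 1 p.2) :=
      MeasureTheory.ae_eq_comp (f := fun p : X × X => (T 1 p.1, T 1 p.2))
        (g := (k : X × X → ℂ)) (g' := k') (hdiagmeas 1).aemeasurable
        (by rw [(hdiagMP 1).map_eq]; exact hkk')
    exact h1.trans (h2.trans (hidem.trans hkk'.symm))
  have hUhull : ∀ γ : Γ, ∀ c ∈ hull, U γ c ∈ hull := by
    rintro γ c ⟨n, γv, w, hw0, hw1, rfl⟩
    refine ⟨n, fun i => γ * γv i, w, hw0, hw1, ?_⟩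
    rw [map_sum]
    refine Finset.sum_congr rfl fun i _ => ?_
    rw [LinearIsometry.map_smul, hUG]
  have hUSsub : ∀ γ : Γ, ∀ c ∈ S, U γ c ∈ S := by
    intro γ c hc
    have h1 : U γ c ∈ closure ((U γ) '' hull) :=
      image_closure_subset_closure_image (U γ).continuous ⟨c, hc, rfl⟩
    refine closure_mono ?_ h1
    rintro _ ⟨d, hd, rfl⟩
    exact hUhull γ d hd
  have hUSeq : ∀ γ : Γ, U γ K₀ = K₀ := by
    intro γ
    refine huniq _ (hUSsub γ K₀ hK₀S) ?_
    rw [(U γ).norm_map]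
  -- the lower bound for all pairs in S
  have hlower : ∀ u ∈ S, ∀ v ∈ S, ε ≤ RCLike.re (inner (𝕜 := ℂ) u v) := by
    have hstep1 : ∀ b : Γ, ∀ v ∈ hull, ε ≤ RCLike.re (inner (𝕜 := ℂ) (G b) v) := by
      rintro b v ⟨n, γv, w, hw0, hw1, rfl⟩
      have heq : RCLike.re (inner (𝕜 := ℂ) (G b) (∑ i, (w i : ℂ) • G (γv i)))
          = ∑ i, w i * RCLike.re (inner (𝕜 := ℂ) (G b) (G (γv i))) := by
        rw [inner_sum, map_sum]
        refine Finset.sum_congr rfl fun i _ => ?_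
        rw [inner_smul_right]
        exact RCLike.re_ofReal_mul _ _
      rw [heq]
      calc ε = ∑ i, w i * ε := by rw [← Finset.sum_mul, hw1, one_mul]
        _ ≤ _ := Finset.sum_le_sum fun i _ =>
            mul_le_mul_of_nonneg_left (hpair b (γv i)) (hw0 i)
    have hstep2 : ∀ b : Γ, ∀ v ∈ S, ε ≤ RCLike.re (inner (𝕜 := ℂ) (G b) v) := by
      intro b v hv
      have hclosed : IsClosed {v : Lp ℂ 2 M | ε ≤ RCLike.re (inner (𝕜 := ℂ) (G b) v)} :=
        isClosed_le continuous_const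
          (RCLike.continuous_re.comp (Continuous.inner continuous_const continuous_id))
      exact closure_minimal (fun v hv => hstep1 b v hv) hclosed hv
    have hstep3 : ∀ v ∈ S, ∀ u ∈ hull, ε ≤ RCLike.re (inner (𝕜 := ℂ) u v) := by
      rintro v hv u ⟨n, γv, w, hw0, hw1, rfl⟩
      have heq : RCLike.re (inner (𝕜 := ℂ) (∑ i, (w i : ℂ) • G (γv i)) v)
          = ∑ i, w i * RCLike.re (inner (𝕜 := ℂ) (G (γv i)) v) := by
        rw [sum_inner, map_sum]
        refine Finset.sum_congr rfl fun i _ => ?_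
        rw [inner_smul_left, Complex.conj_ofReal]
        exact RCLike.re_ofReal_mul _ _
      rw [heq]
      calc ε = ∑ i, w i * ε := by rw [← Finset.sum_mul, hw1, one_mul]
        _ ≤ _ := Finset.sum_le_sum fun i _ =>
            mul_le_mul_of_nonneg_left (hstep2 (γv i) v hv) (hw0 i)
    intro u hu v hv
    have hclosed : IsClosed {u : Lp ℂ 2 M | ε ≤ RCLike.re (inner (𝕜 := ℂ) u v)} :=
      isClosed_le continuous_const
        (RCLike.continuous_re.comp (Continuous.inner continuous_id continuous_const))
    exact closure_minimal (fun u hu => hstep3 v hv u hu) hclosed hu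
  have hKε : ε ≤ ‖K₀‖ ^ 2 := by
    have h1 := hlower K₀ hK₀S K₀ hK₀S
    have h2 : ‖K₀‖ ^ 2 = RCLike.re (inner (𝕜 := ℂ) K₀ K₀) := norm_sq_eq_re_inner K₀
    rw [h2]
    exact h1
  -- norm dictionary
  have hLpnorm : ∀ k : Lp ℂ 2 M, eLpNorm (k : X × X → ℂ) 2 M = ENNReal.ofReal ‖k‖ := by
    intro k
    rw [Lp.norm_def, ENNReal.ofReal_toReal (Lp.eLpNorm_ne_top k)]
  -- coercion of convex combinations
  have hcoe_sum : ∀ (n : ℕ) (γv : Fin n → Γ) (w : Fin n → ℝ),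
      ((∑ i, (w i : ℂ) • G (γv i) : Lp ℂ 2 M) : X × X → ℂ) =ᵐ[M]
        fun p => ∑ i, (w i : ℂ) * g (γv i) p := by
    intro n γv w
    have hgen : ∀ s : Finset (Fin n),
        ((∑ i ∈ s, (w i : ℂ) • G (γv i) : Lp ℂ 2 M) : X × X → ℂ) =ᵐ[M]
          fun p => ∑ i ∈ s, (w i : ℂ) * g (γv i) p := by
      intro s
      induction s using Finset.induction_on with
      | empty =>
        simp only [Finset.sum_empty]
        exact Lp.coeFn_zero ℂ 2 M
      | insert i s his ih =>
        rw [Finset.sum_insert his]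
        have hadd := Lp.coeFn_add ((w i : ℂ) • G (γv i)) (∑ j ∈ s, (w j : ℂ) • G (γv j))
        have hsmul := Lp.coeFn_smul ((w i : ℝ) : ℂ) (G (γv i))
        filter_upwards [hadd, hsmul, (hgL2 (γv i)).coeFn_toLp, ih] with p h1 h2 h3 h4
        rw [h1, Pi.add_apply, h2, Pi.smul_apply, h3, smul_eq_mul, h4,
          Finset.sum_insert his]
    exact hgen Finset.univ
  refine ⟨(K₀ : X × X → ℂ), Lp.memLp K₀, ?_, ?_, ?_, ?_⟩
  · -- approximation by convex combinations of the orbit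
    intro δ hδ
    obtain ⟨c, hc, hdist⟩ := Metric.mem_closure_iff.mp hK₀S δ hδ
    obtain ⟨n, γv, w, hw0, hw1, rfl⟩ := hc
    refine ⟨n, γv, w, hw0, hw1, ?_⟩
    have h1 : (fun p : X × X => (K₀ : X × X → ℂ) p -
        ∑ i, (w i : ℂ) * (f (T (γv i) p.1) * (starRingEnd ℂ) (f (T (γv i) p.2))))
        =ᵐ[M] ((K₀ - ∑ i, (w i : ℂ) • G (γv i) : Lp ℂ 2 M) : X × X → ℂ) := by
      filter_upwards [hcoe_sum n γv w,
        Lp.coeFn_sub K₀ (∑ i, (w i : ℂ) • G (γv i))] with p h2 h3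
      rw [h3, Pi.sub_apply, h2]
    rw [eLpNorm_congr_ae h1, hLpnorm _]
    rw [ENNReal.ofReal_lt_ofReal_iff hδ]
    rwa [dist_eq_norm] at hdist
  · -- minimality
    intro K' hK' happ
    have hL : hK'.toLp K' ∈ S := by
      rw [hSdef, Metric.mem_closure_iff]
      intro δ hδ
      obtain ⟨n, γv, w, hw0, hw1, hlt⟩ := happ δ hδ
      refine ⟨∑ i, (w i : ℂ) • G (γv i), ⟨n, γv, w, hw0, hw1, rfl⟩, ?_⟩
      have h1 : (fun p : X × X => K' p -
          ∑ i, (w i : ℂ) * (f (T (γv i) p.1) * (starRingEnd ℂ) (f (T (γv i) p.2))))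
          =ᵐ[M] ((hK'.toLp K' - ∑ i, (w i : ℂ) • G (γv i) : Lp ℂ 2 M) : X × X → ℂ) := by
        filter_upwards [hcoe_sum n γv w,
          Lp.coeFn_sub (hK'.toLp K') (∑ i, (w i : ℂ) • G (γv i)),
          hK'.coeFn_toLp] with p h2 h3 h4
        rw [h3, Pi.sub_apply, h2, h4]
      rw [dist_eq_norm]
      have h5 := hLpnorm (hK'.toLp K' - ∑ i, (w i : ℂ) • G (γv i))
      rw [← eLpNorm_congr_ae h1] at h5
      rw [h5] at hlt
      exact (ENNReal.ofReal_lt_ofReal_iff_of_nonneg (norm_nonneg _)).mp hlt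
    have h6 : ‖K₀‖ ≤ ‖hK'.toLp K'‖ := hmin _ hL
    have h7 : eLpNorm K' 2 M = ENNReal.ofReal ‖hK'.toLp K'‖ := by
      rw [← hLpnorm (hK'.toLp K')]
      exact (eLpNorm_congr_ae hK'.coeFn_toLp).symm
    rw [hLpnorm K₀, h7]
    exact ENNReal.ofReal_le_ofReal h6
  · -- invariance
    intro γ
    have h1 := hUcoe γ K₀
    rw [hUSeq γ] at h1
    exact h1.symm
  · -- nondegeneracy
    rw [hLpnorm K₀, ← ENNReal.ofReal_pow (norm_nonneg _)]
    exact ENNReal.ofReal_le_ofReal hKε
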